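/- For a finite zero-sum game with payoff matrix Ξ and mixed strategies over simplices, the upper value equals the lower value: min over σ in the simplex of max over β in the simplex of β'Ξσ equals max over β of min over σ of β'Ξσ (the minimax theorem for matrix games). -/

import Mathlib

open Finset

/-- entries of a point of the standard simplex are at most 1 -/
lemma simplex_entry_le_one {n : ℕ} {x : Fin n → ℝ} (hx : x ∈ stdSimplex ℝ (Fin n)) (i : Fin n) :
    x i ≤ 1 := by
  have := Finset.single_le_sum (f := x) (fun j _ => hx.1 j) (Finset.mem_univ i)
  rw [hx.2] at this
  exact this

/-- a global bound on payoffs over the simplices -/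
lemma dot_abs_le {ν μ : ℕ} (Ξ : Matrix (Fin ν) (Fin μ) ℝ) {β : Fin ν → ℝ} {σ : Fin μ → ℝ}
    (hβ : β ∈ stdSimplex ℝ (Fin ν)) (hσ : σ ∈ stdSimplex ℝ (Fin μ)) :
    |dotProduct β (Ξ.mulVec σ)| ≤ ∑ i, ∑ j, |Ξ i j| := by
  have hmv : ∀ i, |Ξ.mulVec σ i| ≤ ∑ j, |Ξ i j| := by
    intro i
    calc |∑ j, Ξ i j * σ j| ≤ ∑ j, |Ξ i j * σ j| := Finset.abs_sum_le_sum_abs _ _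
      _ ≤ ∑ j, |Ξ i j| := by
          refine Finset.sum_le_sum fun j _ => ?_
          rw [abs_mul, abs_of_nonneg (hσ.1 j)]
          calc |Ξ i j| * σ j ≤ |Ξ i j| * 1 :=
                mul_le_mul_of_nonneg_left (simplex_entry_le_one hσ j) (abs_nonneg _)
            _ = |Ξ i j| := mul_one _
  calc |∑ i, β i * Ξ.mulVec σ i| ≤ ∑ i, |β i * Ξ.mulVec σ i| := Finset.abs_sum_le_sum_abs _ _
    _ ≤ ∑ i, ∑ j, |Ξ i j| := by
        refine Finset.sum_le_sum fun i _ => ?_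
        rw [abs_mul, abs_of_nonneg (hβ.1 i)]
        calc β i * |Ξ.mulVec σ i| ≤ 1 * (∑ j, |Ξ i j|) :=
              mul_le_mul (simplex_entry_le_one hβ i) (hmv i) (abs_nonneg _) zero_le_one
          _ = ∑ j, |Ξ i j| := one_mul _

/-- convex combination of numbers ≤ L is ≤ L -/
lemma dot_le_of_le {n : ℕ} {β x : Fin n → ℝ} (hβ : β ∈ stdSimplex ℝ (Fin n)) {L : ℝ}
    (hx : ∀ i, x i ≤ L) : dotProduct β x ≤ L := by
  calc ∑ i, β i * x i ≤ ∑ i, β i * L :=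
        Finset.sum_le_sum fun i _ => mul_le_mul_of_nonneg_left (hx i) (hβ.1 i)
    _ = L := by rw [← Finset.sum_mul, hβ.2, one_mul]

/-- attainment of the supremum of a continuous function on a compact set -/
lemma csSup_attained {E : Type*} [TopologicalSpace E] {s : Set E} (hs : IsCompact s)
    (hne : s.Nonempty) {g : E → ℝ} (hg : ContinuousOn g s) :
    ∃ x : ↥s, (⨆ y : ↥s, g y) = g x ∧ ∀ y ∈ s, g y ≤ g x := by
  obtain ⟨x, hxs, hx⟩ := hs.exists_isMaxOn hne hg
  haveI : Nonempty ↥s := ⟨⟨x, hxs⟩⟩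
  have hbdd : BddAbove (Set.range fun y : ↥s => g y) := by
    refine ⟨g x, ?_⟩
    rintro r ⟨y, rfl⟩
    exact hx y.2
  have h1 : (⨆ y : ↥s, g y) ≤ g x := ciSup_le fun y : ↥s => hx y.2
  have h2 : g x ≤ ⨆ y : ↥s, g y := le_ciSup hbdd (⟨x, hxs⟩ : ↥s)
  exact ⟨⟨x, hxs⟩, le_antisymm h1 h2, fun y hy => hx hy⟩

/-- attainment of the infimum of a continuous function on a compact set -/
lemma csInf_attained {E : Type*} [TopologicalSpace E] {s : Set E} (hs : IsCompact s)
    (hne : s.Nonempty) {g : E → ℝ} (hg : ContinuousOn g s) :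
    ∃ x : ↥s, (⨅ y : ↥s, g y) = g x ∧ ∀ y ∈ s, g x ≤ g y := by
  obtain ⟨x, hxs, hx⟩ := hs.exists_isMinOn hne hg
  haveI : Nonempty ↥s := ⟨⟨x, hxs⟩⟩
  have hbdd : BddBelow (Set.range fun y : ↥s => g y) := by
    refine ⟨g x, ?_⟩
    rintro r ⟨y, rfl⟩
    exact hx y.2
  have h1 : g x ≤ ⨅ y : ↥s, g y := le_ciInf fun y : ↥s => hx y.2
  have h2 : (⨅ y : ↥s, g y) ≤ g x := ciInf_le hbdd (⟨x, hxs⟩ : ↥s)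
  exact ⟨⟨x, hxs⟩, le_antisymm h2 h1, fun y hy => hx hy⟩

/-- Minimax theorem for finite zero-sum matrix games: the upper value equals the
lower value, where mixed strategies range over the probability simplices. -/
theorem matrix_game_minimax {ν μ : ℕ} (hν : 0 < ν) (hμ : 0 < μ)
    (Ξ : Matrix (Fin ν) (Fin μ) ℝ) :
    (⨅ σ : ↥(stdSimplex ℝ (Fin μ)), ⨆ β : ↥(stdSimplex ℝ (Fin ν)),
        dotProduct (β : Fin ν → ℝ) (Ξ.mulVec (σ : Fin μ → ℝ))) =
    (⨆ β : ↥(stdSimplex ℝ (Fin ν)), ⨅ σ : ↥(stdSimplex ℝ (Fin μ)),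
        dotProduct (β : Fin ν → ℝ) (Ξ.mulVec (σ : Fin μ → ℝ))) := by
  classical
  set S := stdSimplex ℝ (Fin ν) with hSdef
  set T := stdSimplex ℝ (Fin μ) with hTdef
  set f : (Fin ν → ℝ) → (Fin μ → ℝ) → ℝ :=
    fun β σ => dotProduct β (Ξ.mulVec σ) with hfdef
  have hSne : S.Nonempty := ⟨Pi.single ⟨0, hν⟩ 1, single_mem_stdSimplex ℝ _⟩
  have hTne : T.Nonempty := ⟨Pi.single ⟨0, hμ⟩ 1, single_mem_stdSimplex ℝ _⟩
  haveI : Nonempty ↥S := ⟨⟨hSne.choose, hSne.choose_spec⟩⟩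
  haveI : Nonempty ↥T := ⟨⟨hTne.choose, hTne.choose_spec⟩⟩
  have hScomp : IsCompact S := isCompact_stdSimplex _ _
  have hTcomp : IsCompact T := isCompact_stdSimplex _ _
  have hcontβ : ∀ σ : Fin μ → ℝ, Continuous fun β : Fin ν → ℝ => f β σ := fun σ =>
    continuous_id.dotProduct continuous_const
  have hcontσ : ∀ β : Fin ν → ℝ, Continuous fun σ : Fin μ → ℝ => f β σ := fun β =>
    continuous_const.dotProduct (continuous_const.matrix_mulVec continuous_id)
  set M : ℝ := ∑ i, ∑ j, |Ξ i j| with hMdef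
  have hub : ∀ (β : ↥S) (σ : ↥T), f β.1 σ.1 ≤ M := fun β σ => (abs_le.1 (dot_abs_le Ξ β.2 σ.2)).2
  have hlb : ∀ (β : ↥S) (σ : ↥T), -M ≤ f β.1 σ.1 := fun β σ => (abs_le.1 (dot_abs_le Ξ β.2 σ.2)).1
  have hbddA : ∀ σ : ↥T, BddAbove (Set.range fun β : ↥S => f β.1 σ.1) := by
    intro σ; exact ⟨M, by rintro r ⟨β, rfl⟩; exact hub β σ⟩
  have hbddB : ∀ β : ↥S, BddBelow (Set.range fun σ : ↥T => f β.1 σ.1) := by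
    intro β; exact ⟨-M, by rintro r ⟨σ, rfl⟩; exact hlb β σ⟩
  set L : ℝ := ⨆ β : ↥S, ⨅ σ : ↥T, f β.1 σ.1 with hLdef
  -- the easy direction
  have easy : L ≤ ⨅ σ : ↥T, ⨆ β : ↥S, f β.1 σ.1 := by
    refine le_ciInf fun σ => ?_
    refine ciSup_le fun β => ?_
    exact (ciInf_le (hbddB β) σ).trans (le_ciSup (hbddA σ) β)
  -- the outer sup is well defined
  have hbddL : BddAbove (Set.range fun β : ↥S => ⨅ σ : ↥T, f β.1 σ.1) := by
    obtain ⟨σ₀⟩ := (inferInstance : Nonempty ↥T)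
    refine ⟨M, ?_⟩
    rintro r ⟨β, rfl⟩
    exact (ciInf_le (hbddB β) σ₀).trans (hub β σ₀)
  -- key step: a minimax strategy for the column player
  have key : ∃ σ₀ ∈ T, ∀ i, Ξ.mulVec σ₀ i ≤ L := by
    by_contra hcon
    push_neg at hcon
    set K : Set (Fin ν → ℝ) := (fun σ => Ξ.mulVec σ) '' T with hKdef
    set C : Set (Fin ν → ℝ) := {y | ∀ i, y i ≤ L} with hCdef
    have hCeq : C = ⋂ i, {y : Fin ν → ℝ | y i ≤ L} := by
      ext y; simp [hCdef, Set.mem_iInter]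
    have hCconv : Convex ℝ C := by
      rw [hCeq]
      exact convex_iInter fun i => convex_halfSpace_le ⟨fun a b => rfl, fun c a => rfl⟩ L
    have hCclosed : IsClosed C := by
      rw [hCeq]
      exact isClosed_iInter fun i => isClosed_le (continuous_apply i) continuous_const
    have hKconv : Convex ℝ K :=
      (convex_stdSimplex ℝ _).is_linear_image
        ⟨fun a b => Ξ.mulVec_add a b, fun c a => Ξ.mulVec_smul c a⟩
    have hKcomp : IsCompact K :=
      hTcomp.image (continuous_const.matrix_mulVec continuous_id)
    have hdisj : Disjoint C K := by
      rw [Set.disjoint_left]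
      rintro y hyC ⟨σ, hσT, rfl⟩
      obtain ⟨i, hi⟩ := hcon σ hσT
      exact absurd (hyC i) (not_le.2 hi)
    obtain ⟨ℓ, u, v, hCu, huv, hKv⟩ :=
      geometric_hahn_banach_closed_compact hCconv hCclosed hKconv hKcomp hdisj
    set b : Fin ν → ℝ := fun i => ℓ (fun j => if i = j then (1 : ℝ) else 0) with hbdef
    have hrep : ∀ x : Fin ν → ℝ, ℓ x = ∑ i, x i * b i := by
      intro x
      conv_lhs => rw [pi_eq_sum_univ x]
      rw [map_sum]
      exact Finset.sum_congr rfl fun i _ => by rw [map_smul, smul_eq_mul]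
    set c0 : ℝ := ℓ (fun _ => L) with hc0def
    have hc0u : c0 < u := hCu _ (fun i => le_refl L)
    have hc0 : c0 = L * ∑ i, b i := by
      rw [hc0def, hrep, Finset.mul_sum]
    have hbnonneg : ∀ i, 0 ≤ b i := by
      intro i
      by_contra hneg
      push_neg at hneg
      set t : ℝ := (u - c0) / (-b i) with htdef
      have htpos : 0 ≤ t := div_nonneg (by linarith) (by linarith)
      have hyC : (fun j => if i = j then L - t else L) ∈ C := by
        intro j
        dsimp
        split
        · linarith
        · exact le_refl L
      have hylt := hCu _ hyC
      have hy : (fun j => if i = j then L - t else L) =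
          (fun _ : Fin ν => L) + (-t) • (fun j => if i = j then (1 : ℝ) else 0) := by
        funext j
        by_cases h : i = j <;> simp [h] <;> ring
      rw [hy, map_add, map_smul, smul_eq_mul, ← hc0def] at hylt
      have hbne : b i ≠ 0 := ne_of_lt hneg
      have hnt : -t = (u - c0) / b i := by rw [htdef, div_neg, neg_neg]
      have heq : -t * b i = u - c0 := by rw [hnt, div_mul_cancel₀ _ hbne]
      linarith [hylt, heq]
    have hvσ : ∀ σ ∈ T, v < ∑ i, Ξ.mulVec σ i * b i := by
      intro σ hσ
      have := hKv _ ⟨σ, hσ, rfl⟩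
      rwa [hrep] at this
    set s : ℝ := ∑ i, b i with hsdef
    have hs0 : 0 ≤ s := Finset.sum_nonneg fun i _ => hbnonneg i
    have hspos : 0 < s := by
      rcases lt_or_eq_of_le hs0 with h | h
      · exact h
      · exfalso
        have hall : ∀ i ∈ Finset.univ, b i = 0 :=
          (Finset.sum_eq_zero_iff_of_nonneg fun i _ => hbnonneg i).1 h.symm
        obtain ⟨σ₀, hσ₀⟩ := hTne
        have h1 := hvσ σ₀ hσ₀
        have h2 : (∑ i, Ξ.mulVec σ₀ i * b i) = 0 :=
          Finset.sum_eq_zero fun i _ => by rw [hall i (Finset.mem_univ i), mul_zero]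
        have h3 : c0 = 0 := by rw [hc0, ← h, mul_zero]
        rw [h2] at h1
        linarith
    set βh : Fin ν → ℝ := fun i => b i / s with hβhdef
    have hβhS : βh ∈ S := by
      constructor
      · intro i
        exact div_nonneg (hbnonneg i) hs0
      · rw [hβhdef]
        simp only
        rw [← Finset.sum_div, ← hsdef, div_self hspos.ne']
    have hstrict : ∀ σ ∈ T, L < f βh σ := by
      intro σ hσ
      have h1 : f βh σ = (∑ i, Ξ.mulVec σ i * b i) / s := by
        rw [hfdef]
        simp only [dotProduct, hβhdef]
        rw [Finset.sum_div]
        exact Finset.sum_congr rfl fun i _ => by ring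
      have h2 := hvσ σ hσ
      rw [h1, lt_div_iff₀ hspos]
      have : L * s = c0 := by rw [hc0, hsdef]
      linarith
    -- contradiction: the inf over σ of f βh σ exceeds L, yet L is the sup of such infs
    obtain ⟨σs, hmineq, _⟩ := csInf_attained hTcomp hTne (hcontσ βh).continuousOn
    have hgt : L < ⨅ σ : ↥T, f βh σ.1 := by
      rw [hmineq]
      exact hstrict _ σs.2
    have hle : (⨅ σ : ↥T, f βh σ.1) ≤ L := by
      rw [hLdef]
      exact le_ciSup hbddL (⟨βh, hβhS⟩ : ↥S)
    linarith
  -- hard direction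
  obtain ⟨σ₀, hσ₀T, hσ₀⟩ := key
  have hard : (⨅ σ : ↥T, ⨆ β : ↥S, f β.1 σ.1) ≤ L := by
    have hbddI : BddBelow (Set.range fun σ : ↥T => ⨆ β : ↥S, f β.1 σ.1) := by
      obtain ⟨β₀⟩ := (inferInstance : Nonempty ↥S)
      refine ⟨-M, ?_⟩
      rintro r ⟨σ, rfl⟩
      exact (hlb β₀ σ).trans (le_ciSup (hbddA σ) β₀)
    refine (ciInf_le hbddI (⟨σ₀, hσ₀T⟩ : ↥T)).trans ?_
    exact ciSup_le fun β => dot_le_of_le β.2 hσ₀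
  exact le_antisymm hard easy
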